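/- arXiv:math/0606366 — 3 statements merged into one kernel-verified Lean document; each statement's English description precedes it below -/
import Mathlib

section
/- Let L be a finite semilattice. The map Γ : ℂ^L → ℂ^L sending the basis vector e_t (for t ∈ L) to the indicator function of the down-set {s ∈ L : s ≼ t} (where ≼ is the canonical order) is multiplicative: Γ(e_s * e_t) = Γ(e_s)·Γ(e_t), where the domain carries the semigroup-algebra (convolution) product and the codomain carries pointwise multiplication. -/
open Finset Classical

/-- The Schützenberger representation of a finite semilattice, as a linear map
`ℂ^L → ℂ^L` sending the basis vector `e_t` to the indicator of the down-set of
`t` (with respect to the canonical order `s ≼ t ↔ s * t = s`). -/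
noncomputable def schutzRep {L : Type*} [Mul L] [Fintype L] (a : L → ℂ) : L → ℂ :=
  fun x => ∑ t : L, if x * t = x then a t else 0

lemma schutzRep_single {L : Type*} [Mul L] [Fintype L] [DecidableEq L] (u x : L) :
    schutzRep (Pi.single u (1 : ℂ)) x = if x * u = x then 1 else 0 := by
  classical
  unfold schutzRep
  rw [Finset.sum_eq_single u]
  · simp
  · intro b _ hb
    simp [Pi.single_apply, hb]
  · simp

/-- The Schützenberger representation of a finite semilattice is multiplicative:
`Γ(e_s * e_t) = Γ(e_s) · Γ(e_t)`, where `e_s e_t = e_{st}` is the convolution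
product of basis vectors and the codomain has pointwise multiplication. -/
theorem schutzRep_multiplicative {L : Type*} [CommSemigroup L] [Fintype L]
    [DecidableEq L] (hidem : ∀ s : L, s * s = s) (s t : L) :
    schutzRep (Pi.single (s * t) (1 : ℂ)) =
      schutzRep (Pi.single s (1 : ℂ)) * schutzRep (Pi.single t (1 : ℂ)) := by
  funext x
  rw [Pi.mul_apply, schutzRep_single, schutzRep_single, schutzRep_single]
  have key : x * (s * t) = x ↔ (x * s = x ∧ x * t = x) := by
    constructor
    · intro h
      constructor
      · have : x * s = x * (s * t) * s := by rw [h]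
        rw [this, mul_assoc, mul_comm (s * t) s, ← mul_assoc s s t, hidem s, h]
      · have : x * t = x * (s * t) * t := by rw [h]
        rw [this, mul_assoc, mul_assoc, hidem t, h]
    · rintro ⟨h1, h2⟩
      rw [← mul_assoc, h1, h2]
  by_cases h : x * (s * t) = x
  · rw [if_pos h, if_pos (key.mp h).1, if_pos (key.mp h).2, one_mul]
  · rw [if_neg h]
    rcases Decidable.not_and_iff_or_not.mp (fun hc => h (key.mpr hc)) with h1 | h1
    · rw [if_neg h1, zero_mul]
    · rw [if_neg h1, mul_zero]
end

section
/- Let L be a finite semilattice with zero element θ, and let Γ : ℓ¹(L) → ℓ¹(L) denote the Schützenberger representation (which is a linear bijection). Then the operator norm of Γ^{-1} (with respect to the ℓ¹ norms) is at most 2^{|L|−1}. -/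
open Finset Classical


lemma count_lemma {α : Type*} [PartialOrder α] :
    ∀ (n : ℕ) (S : Finset α), S.card ≤ n → S.Nonempty →
      ∑ x ∈ S, (2:ℝ) ^ (S.filter (fun s => x < s)).card ≤ 2 ^ S.card - 1 := by
  classical
  intro n
  induction n with
  | zero =>
    intro S hc hne
    have := hne.card_pos
    omega
  | succ n ih =>
    intro S hc hne
    obtain ⟨m, hm, hmax⟩ := S.exists_maximal hne
    have hcard : (S.erase m).card = S.card - 1 := Finset.card_erase_of_mem hm
    have hSpos : 1 ≤ S.card := hne.card_pos
    have hsplit : (2:ℝ) ^ (S.filter (fun s => m < s)).card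
        + ∑ x ∈ S.erase m, (2:ℝ) ^ (S.filter (fun s => x < s)).card
        = ∑ x ∈ S, (2:ℝ) ^ (S.filter (fun s => x < s)).card :=
      Finset.add_sum_erase S (fun x => (2:ℝ) ^ (S.filter (fun s => x < s)).card) hm
    rw [← hsplit]
    have hmterm : (S.filter (fun s => m < s)).card = 0 := by
      rw [Finset.card_eq_zero, Finset.filter_eq_empty_iff]
      intro x hx
      exact fun hlt => lt_irrefl _ (lt_of_lt_of_le hlt (hmax hx hlt.le))
    rw [hmterm, pow_zero]
    have hrest : ∀ x ∈ S.erase m,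
        (2:ℝ) ^ (S.filter (fun s => x < s)).card ≤
        2 * 2 ^ ((S.erase m).filter (fun s => x < s)).card := by
      intro x hx
      have hsub : S.filter (fun s => x < s) ⊆
          insert m ((S.erase m).filter (fun s => x < s)) := by
        intro s hs
        simp only [Finset.mem_filter, Finset.mem_insert, Finset.mem_erase] at hs ⊢
        by_cases hsm : s = m
        · exact Or.inl hsm
        · exact Or.inr ⟨⟨hsm, hs.1⟩, hs.2⟩
      have hle : (S.filter (fun s => x < s)).card ≤
          ((S.erase m).filter (fun s => x < s)).card + 1 := by
        calc _ ≤ (insert m ((S.erase m).filter (fun s => x < s))).card :=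
              Finset.card_le_card hsub
          _ ≤ _ := Finset.card_insert_le _ _
      calc (2:ℝ) ^ (S.filter (fun s => x < s)).card
          ≤ 2 ^ (((S.erase m).filter (fun s => x < s)).card + 1) :=
            pow_le_pow_right₀ (by norm_num) hle
        _ = 2 * 2 ^ (((S.erase m).filter (fun s => x < s)).card) := by ring
    by_cases hem : (S.erase m).Nonempty
    · have hec : (S.erase m).card ≤ n := by omega
      have hih := ih (S.erase m) hec hem
      have h2 : ∑ x ∈ S.erase m, (2:ℝ) ^ (S.filter (fun s => x < s)).card
          ≤ 2 * (2 ^ (S.erase m).card - 1) := by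
        calc _ ≤ ∑ x ∈ S.erase m, 2 * (2:ℝ) ^ ((S.erase m).filter (fun s => x < s)).card :=
              Finset.sum_le_sum hrest
          _ = 2 * ∑ x ∈ S.erase m, (2:ℝ) ^ ((S.erase m).filter (fun s => x < s)).card := by
              rw [Finset.mul_sum]
          _ ≤ 2 * (2 ^ (S.erase m).card - 1) := by linarith
      have hpow : (2:ℝ) ^ (S.erase m).card = 2 ^ S.card / 2 := by
        rw [hcard, eq_div_iff (by norm_num : (2:ℝ) ≠ 0), ← pow_succ]
        congr 1
        omega
      rw [hpow] at h2
      linarith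
    · rw [Finset.not_nonempty_iff_eq_empty] at hem
      have hc0 : (S.erase m).card = 0 := by rw [hem]; rfl
      have hc1 : S.card = 1 := by omega
      rw [hem, hc1]
      norm_num


lemma swap_lemma {α : Type*} [Fintype α] (p : α → Prop) (q : α → α → Prop)
    (h : α → α → ℝ) :
    ∑ t ∈ univ.filter p, ∑ u ∈ univ.filter (q t), h t u
      = ∑ u : α, ∑ t ∈ univ.filter (fun t => p t ∧ q t u), h t u := by
  classical
  have l1 : ∑ t ∈ univ.filter p, ∑ u ∈ univ.filter (q t), h t u
      = ∑ t : α, ∑ u : α, if p t ∧ q t u then h t u else 0 := by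
    rw [Finset.sum_filter]
    apply Finset.sum_congr rfl
    intro t _
    by_cases hp : p t
    · rw [if_pos hp, Finset.sum_filter]
      apply Finset.sum_congr rfl
      intro u _
      by_cases hq : q t u
      · rw [if_pos hq, if_pos ⟨hp, hq⟩]
      · rw [if_neg hq, if_neg (fun h => hq h.2)]
    · rw [if_neg hp, eq_comm, Finset.sum_eq_zero]
      intro u _
      rw [if_neg (fun h => hp h.1)]
  rw [l1, Finset.sum_comm]
  apply Finset.sum_congr rfl
  intro u _
  rw [Finset.sum_filter]

lemma coeff_lemma {α : Type*} [PartialOrder α] [Fintype α] (x u : α) (hxu : x < u) :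
    ∑ t ∈ univ.filter (fun t => x < t ∧ t ≤ u),
        (2:ℝ) ^ (univ.filter (fun s => t < s ∧ s < u)).card
      ≤ 2 ^ (univ.filter (fun s => x < s ∧ s < u)).card := by
  classical
  set S := univ.filter (fun s => x < s ∧ s < u) with hS
  have hfil : univ.filter (fun t => x < t ∧ t ≤ u) = insert u S := by
    ext t
    simp only [hS, Finset.mem_filter, Finset.mem_insert, Finset.mem_univ, true_and]
    constructor
    · rintro ⟨h1, h2⟩
      rcases eq_or_lt_of_le h2 with h | h
      · exact Or.inl h
      · exact Or.inr ⟨h1, h⟩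
    · rintro (rfl | ⟨h1, h2⟩)
      · exact ⟨hxu, le_refl _⟩
      · exact ⟨h1, le_of_lt h2⟩
  have huS : u ∉ S := by
    simp [hS, lt_irrefl]
  rw [hfil, Finset.sum_insert huS]
  have huterm : (univ.filter (fun s => u < s ∧ s < u)).card = 0 := by
    rw [Finset.card_eq_zero, Finset.filter_eq_empty_iff]
    intro s _
    rintro ⟨h1, h2⟩
    exact absurd (h1.trans h2) (lt_irrefl u)
  rw [huterm, pow_zero]
  have hterms : ∀ t ∈ S, (univ.filter (fun s => t < s ∧ s < u)) = S.filter (fun s => t < s) := by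
    intro t ht
    simp only [hS, Finset.mem_filter, Finset.mem_univ, true_and] at ht
    ext s
    simp only [hS, Finset.mem_filter, Finset.mem_univ, true_and]
    constructor
    · rintro ⟨h1, h2⟩
      exact ⟨⟨ht.1.trans h1, h2⟩, h1⟩
    · rintro ⟨⟨_, h2⟩, h3⟩
      exact ⟨h3, h2⟩
  rw [Finset.sum_congr rfl (fun t ht => by rw [hterms t ht])]
  by_cases hSne : S.Nonempty
  · have := count_lemma S.card S le_rfl hSne
    linarith
  · rw [Finset.not_nonempty_iff_eq_empty] at hSne
    rw [hSne]
    simp only [Finset.sum_empty, add_zero, Finset.card_empty]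
    exact le_of_eq (pow_zero 2).symm |>.trans (one_le_pow₀ (by norm_num))

lemma pointwise_bound {α : Type*} [PartialOrder α] [Fintype α]
    (f g : α → ℝ) (hg : ∀ x, 0 ≤ g x)
    (hrec : ∀ x, f x ≤ g x + ∑ t ∈ univ.filter (fun t => x < t), f t) :
    ∀ (n : ℕ) (x : α), (univ.filter (fun t => x < t)).card ≤ n →
      f x ≤ ∑ u ∈ univ.filter (fun u => x ≤ u),
        (2:ℝ) ^ ((univ.filter (fun s => x < s ∧ s < u)).card) * g u := by
  classical
  intro n
  induction n with
  | zero =>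
    intro x hx
    have hempty : univ.filter (fun t => x < t) = ∅ := by
      rw [← Finset.card_eq_zero]; omega
    have h1 : f x ≤ g x := by
      have := hrec x
      rw [hempty] at this
      simpa using this
    have hxm : x ∈ univ.filter (fun u => x ≤ u) := by simp
    have hterm : (2:ℝ) ^ ((univ.filter (fun s => x < s ∧ s < x)).card) * g x = g x := by
      have : (univ.filter (fun s => x < s ∧ s < x)).card = 0 := by
        rw [Finset.card_eq_zero, Finset.filter_eq_empty_iff]
        rintro s _ ⟨h1, h2⟩
        exact absurd (h1.trans h2) (lt_irrefl x)
      rw [this, pow_zero, one_mul]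
    have hsingle := Finset.single_le_sum
      (f := fun u => (2:ℝ) ^ ((univ.filter (fun s => x < s ∧ s < u)).card) * g u)
      (fun u _ => mul_nonneg (by positivity) (hg u)) hxm
    rw [hterm] at hsingle
    linarith
  | succ n ih =>
    intro x hx
    have hstep : ∀ t ∈ univ.filter (fun t => x < t),
        f t ≤ ∑ u ∈ univ.filter (fun u => t ≤ u),
          (2:ℝ) ^ ((univ.filter (fun s => t < s ∧ s < u)).card) * g u := by
      intro t ht
      simp only [Finset.mem_filter, Finset.mem_univ, true_and] at ht
      apply ih
      have hss : univ.filter (fun s => t < s) ⊂ univ.filter (fun s => x < s) := by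
        constructor
        · intro s hs
          simp only [Finset.mem_filter, Finset.mem_univ, true_and] at hs ⊢
          exact ht.trans hs
        · intro hcon
          have : t ∈ univ.filter (fun s => x < s) := by simp [ht]
          have := hcon this
          simp only [Finset.mem_filter, Finset.mem_univ, true_and] at this
          exact absurd this (lt_irrefl t)
      have := Finset.card_lt_card hss
      omega
    have h2 : f x ≤ g x + ∑ t ∈ univ.filter (fun t => x < t),
        ∑ u ∈ univ.filter (fun u => t ≤ u),
          (2:ℝ) ^ ((univ.filter (fun s => t < s ∧ s < u)).card) * g u := by
      have := hrec x
      have h3 := Finset.sum_le_sum hstep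
      linarith
    rw [swap_lemma (fun t => x < t) (fun t u => t ≤ u)
      (fun t u => (2:ℝ) ^ ((univ.filter (fun s => t < s ∧ s < u)).card) * g u)] at h2
    have h4 : ∀ u : α,
        ∑ t ∈ univ.filter (fun t => x < t ∧ t ≤ u),
          (2:ℝ) ^ ((univ.filter (fun s => t < s ∧ s < u)).card) * g u
        ≤ if x < u then (2:ℝ) ^ ((univ.filter (fun s => x < s ∧ s < u)).card) * g u else 0 := by
      intro u
      by_cases hxu : x < u
      · rw [if_pos hxu, ← Finset.sum_mul]
        exact mul_le_mul_of_nonneg_right (coeff_lemma x u hxu) (hg u)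
      · rw [if_neg hxu]
        have : univ.filter (fun t => x < t ∧ t ≤ u) = ∅ := by
          rw [Finset.filter_eq_empty_iff]
          rintro t _ ⟨h1, h2⟩
          exact hxu (lt_of_lt_of_le h1 h2)
        rw [this, Finset.sum_empty]
    have h5 : ∑ u : α, ∑ t ∈ univ.filter (fun t => x < t ∧ t ≤ u),
          (2:ℝ) ^ ((univ.filter (fun s => t < s ∧ s < u)).card) * g u
        ≤ ∑ u ∈ univ.filter (fun u => x < u),
          (2:ℝ) ^ ((univ.filter (fun s => x < s ∧ s < u)).card) * g u := by
      calc _ ≤ ∑ u : α, if x < u then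
            (2:ℝ) ^ ((univ.filter (fun s => x < s ∧ s < u)).card) * g u else 0 :=
          Finset.sum_le_sum (fun u _ => h4 u)
        _ = _ := (Finset.sum_filter _ _).symm
    have hfil : univ.filter (fun u => x ≤ u) = insert x (univ.filter (fun u => x < u)) := by
      ext u
      simp only [Finset.mem_filter, Finset.mem_insert, Finset.mem_univ, true_and]
      constructor
      · intro h
        rcases eq_or_lt_of_le h with h | h
        · exact Or.inl h.symm
        · exact Or.inr h
      · rintro (rfl | h)
        · exact le_refl _
        · exact le_of_lt h
    have hxnot : x ∉ univ.filter (fun u => x < u) := by simp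
    rw [hfil, Finset.sum_insert hxnot]
    have hxx : (2:ℝ) ^ ((univ.filter (fun s => x < s ∧ s < x)).card) * g x = g x := by
      have : (univ.filter (fun s => x < s ∧ s < x)).card = 0 := by
        rw [Finset.card_eq_zero, Finset.filter_eq_empty_iff]
        rintro s _ ⟨h1, h2⟩
        exact absurd (h1.trans h2) (lt_irrefl x)
      rw [this, pow_zero, one_mul]
    rw [hxx]
    linarith

lemma sum_bound {α : Type*} [PartialOrder α] [Fintype α]
    (f g : α → ℝ) (hg : ∀ x, 0 ≤ g x)
    (hrec : ∀ x, f x ≤ g x + ∑ t ∈ univ.filter (fun t => x < t), f t) :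
    ∑ x, f x ≤ 2 ^ (Fintype.card α - 1) * ∑ t, g t := by
  classical
  have h1 : ∑ x, f x ≤ ∑ x : α, ∑ u ∈ univ.filter (fun u => x ≤ u),
      (2:ℝ) ^ ((univ.filter (fun s => x < s ∧ s < u)).card) * g u :=
    Finset.sum_le_sum (fun x _ => pointwise_bound f g hg hrec _ x le_rfl)
  have h2 : ∑ x : α, ∑ u ∈ univ.filter (fun u => x ≤ u),
        (2:ℝ) ^ ((univ.filter (fun s => x < s ∧ s < u)).card) * g u
      = ∑ u : α, ∑ t ∈ univ.filter (fun t => t ≤ u),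
        (2:ℝ) ^ ((univ.filter (fun s => t < s ∧ s < u)).card) * g u := by
    have := swap_lemma (fun _ : α => True) (fun t u => t ≤ u)
      (fun t u => (2:ℝ) ^ ((univ.filter (fun s => t < s ∧ s < u)).card) * g u)
    simp only [Finset.filter_true, true_and] at this
    exact this
  have h3 : ∀ u : α, ∑ t ∈ univ.filter (fun t => t ≤ u),
        (2:ℝ) ^ ((univ.filter (fun s => t < s ∧ s < u)).card) * g u
      ≤ 2 ^ (Fintype.card α - 1) * g u := by
    intro u
    rw [← Finset.sum_mul]
    apply mul_le_mul_of_nonneg_right _ (hg u)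
    have hfil : univ.filter (fun t => t ≤ u) = insert u (univ.filter (fun t => t < u)) := by
      ext t
      simp only [Finset.mem_filter, Finset.mem_insert, Finset.mem_univ, true_and]
      constructor
      · intro h
        rcases eq_or_lt_of_le h with h | h
        · exact Or.inl h
        · exact Or.inr h
      · rintro (rfl | h)
        · exact le_refl _
        · exact le_of_lt h
    have hunot : u ∉ univ.filter (fun t => t < u) := by simp
    rw [hfil, Finset.sum_insert hunot]
    have huu : (univ.filter (fun s => u < s ∧ s < u)).card = 0 := by
      rw [Finset.card_eq_zero, Finset.filter_eq_empty_iff]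
      rintro s _ ⟨hs1, hs2⟩
      exact absurd (hs1.trans hs2) (lt_irrefl u)
    rw [huu, pow_zero]
    set S := univ.filter (fun t => t < u) with hS
    have hScard : S.card ≤ Fintype.card α - 1 := by
      have hsub : S ⊆ univ.erase u := by
        intro t ht
        simp only [hS, Finset.mem_filter, Finset.mem_univ, true_and] at ht
        simp [Finset.mem_erase, ne_of_lt ht]
      have := Finset.card_le_card hsub
      rw [Finset.card_erase_of_mem (Finset.mem_univ u)] at this
      simpa using this
    have hterms : ∀ t ∈ S, (univ.filter (fun s => t < s ∧ s < u)) = S.filter (fun s => t < s) := by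
      intro t ht
      ext s
      simp only [hS, Finset.mem_filter, Finset.mem_univ, true_and]
      tauto
    rw [Finset.sum_congr rfl (fun t ht => by rw [hterms t ht])]
    by_cases hSne : S.Nonempty
    · have hcl := count_lemma S.card S le_rfl hSne
      have hmono : (2:ℝ) ^ S.card ≤ 2 ^ (Fintype.card α - 1) :=
        pow_le_pow_right₀ (by norm_num) hScard
      linarith
    · rw [Finset.not_nonempty_iff_eq_empty] at hSne
      rw [hSne]
      simp only [Finset.sum_empty, add_zero]
      exact one_le_pow₀ (by norm_num)
  calc ∑ x, f x ≤ _ := h1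
    _ = _ := h2
    _ ≤ ∑ u : α, 2 ^ (Fintype.card α - 1) * g u := Finset.sum_le_sum (fun u _ => h3 u)
    _ = 2 ^ (Fintype.card α - 1) * ∑ t, g t := by rw [Finset.mul_sum]

/-- For a finite semilattice `L` with zero element `θ`, the inverse of the
Schützenberger representation `Γ : ℓ¹(L) → ℓ¹(L)` has operator norm at most
`2^{|L|−1}` with respect to the `ℓ¹` norms. -/
theorem schutzRep_inverse_norm_bound {L : Type*} [CommSemigroup L] [Fintype L]
    (hidem : ∀ s : L, s * s = s) (θ : L) (hθ : ∀ x : L, x * θ = θ ∧ θ * x = θ)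
    (M : (L → ℂ) → (L → ℂ))
    (hM : ∀ a : L → ℂ, schutzRep (M a) = a ∧ M (schutzRep a) = a) :
    ∀ a : L → ℂ,
      ∑ x : L, ‖M a x‖ ≤
        2 ^ (Fintype.card L - 1) * ∑ t : L, ‖a t‖ := by
  classical
  letI instPO : PartialOrder L :=
    { le := fun x y => x * y = x
      le_refl := hidem
      le_trans := fun a b c hab hbc => by
        show a * c = a
        calc a * c = (a * b) * c := by rw [hab]
          _ = a * (b * c) := mul_assoc a b c
          _ = a * b := by rw [hbc]
          _ = a := hab
      le_antisymm := fun a b hab hba => by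
        calc a = a * b := hab.symm
          _ = b * a := mul_comm a b
          _ = b := hba }
  letI : DecidableRel (α := L) (· ≤ ·) := fun _ _ => Classical.propDecidable _
  letI : DecidableRel (α := L) (· < ·) := fun _ _ => Classical.propDecidable _
  intro a
  have key : ∀ x : L, a x = M a x + ∑ t ∈ univ.filter (fun t => x < t), M a t := by
    intro x
    have h0 : schutzRep (M a) x = a x := congrFun (hM a).1 x
    have h1 : ∑ t ∈ univ.filter (fun t => x ≤ t), M a t = a x := by
      rw [Finset.sum_filter]
      rw [← h0]
      unfold schutzRep
      apply Finset.sum_congr rfl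
      intro t _
      by_cases h : x ≤ t
      · rw [if_pos h, if_pos (show x * t = x from h)]
      · rw [if_neg h, if_neg (show ¬ x * t = x from fun hc => h hc)]
    have hfil : univ.filter (fun t => x ≤ t) = insert x (univ.filter (fun t => x < t)) := by
      ext t
      simp only [Finset.mem_filter, Finset.mem_insert, Finset.mem_univ, true_and]
      constructor
      · intro h
        rcases eq_or_lt_of_le h with h | h
        · exact Or.inl h.symm
        · exact Or.inr h
      · rintro (rfl | h)
        · exact le_refl _
        · exact le_of_lt h
    have hxnot : x ∉ univ.filter (fun t => x < t) := by simp
    rw [hfil, Finset.sum_insert hxnot] at h1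
    exact h1.symm
  have hrec : ∀ x : L, ‖M a x‖ ≤ ‖a x‖ +
      ∑ t ∈ univ.filter (fun t => x < t), ‖M a t‖ := by
    intro x
    have : M a x = a x - ∑ t ∈ univ.filter (fun t => x < t), M a t := by
      rw [key x]; ring
    rw [this]
    calc ‖a x - ∑ t ∈ univ.filter (fun t => x < t), M a t‖
        ≤ ‖a x‖ + ‖∑ t ∈ univ.filter (fun t => x < t), M a t‖ := by
          exact norm_sub_le _ _
      _ ≤ ‖a x‖ + ∑ t ∈ univ.filter (fun t => x < t), ‖M a t‖ := by
          gcongr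
          exact norm_sum_le (univ.filter (fun t => x < t)) (M a)
  exact sum_bound (fun x => ‖M a x‖) (fun t => ‖a t‖)
    (fun t => norm_nonneg _) hrec
end

section
/- Let L be a finite unital semilattice with |L| = n, and let μ be the Möbius function of (L, ≼). If the element Δ = Σ_{(s,t)} (Σ_{x : s ≼ x, t ≼ x} μ(s,x)μ(t,x)) e_s ⊗ e_t (the unique diagonal of ℂ[L] transported via the Schützenberger isomorphism) has ℓ¹ norm at most C, then n ≤ C. -/
open Finset Classical

/-- For a finite unital semilattice `L` with `|L| = n`: if the unique diagonal of
`ℂ[L]` (transported through the Schützenberger isomorphism), whose coefficient at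
`e_s ⊗ e_t` is `Σ_{x ⪰ s, x ⪰ t} μ(s,x) μ(t,x)`, has `ℓ¹` norm at most `C`, then
`n ≤ C`. -/
theorem card_le_of_diagonal_norm_le {L : Type*} [CommMonoid L] [PartialOrder L]
    [Fintype L] [LocallyFiniteOrder L] [DecidableEq L]
    (hidem : ∀ s : L, s * s = s)
    (horder : ∀ x y : L, x ≤ y ↔ x * y = x)
    (C : ℝ)
    (hnorm : ∑ s : L, ∑ t : L,
        |∑ x : L, if s ≤ x ∧ t ≤ x then
            IncidenceAlgebra.mu ℝ s x * IncidenceAlgebra.mu ℝ t x else 0| ≤ C) :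
    (Fintype.card L : ℝ) ≤ C := by
  have key : ∀ s : L, (1 : ℝ) ≤
      |∑ x : L, if s ≤ x ∧ s ≤ x then
          IncidenceAlgebra.mu ℝ s x * IncidenceAlgebra.mu ℝ s x else 0| := by
    intro s
    have hnn : ∀ x ∈ (univ : Finset L),
        (0 : ℝ) ≤ (if s ≤ x ∧ s ≤ x then
          IncidenceAlgebra.mu ℝ s x * IncidenceAlgebra.mu ℝ s x else 0) := by
      intro x _
      split
      · exact mul_self_nonneg _
      · exact le_refl 0
    have h1 : (1 : ℝ) ≤ ∑ x : L, if s ≤ x ∧ s ≤ x then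
        IncidenceAlgebra.mu ℝ s x * IncidenceAlgebra.mu ℝ s x else 0 := by
      have := Finset.single_le_sum hnn (mem_univ s)
      simpa [IncidenceAlgebra.mu_self] using this
    calc (1:ℝ) ≤ _ := h1
      _ ≤ _ := le_abs_self _
  have h2 : ∀ s : L, (1 : ℝ) ≤ ∑ t : L,
      |∑ x : L, if s ≤ x ∧ t ≤ x then
          IncidenceAlgebra.mu ℝ s x * IncidenceAlgebra.mu ℝ t x else 0| := by
    intro s
    exact le_trans (key s) (Finset.single_le_sum
      (f := fun t => |∑ x : L, if s ≤ x ∧ t ≤ x then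
          IncidenceAlgebra.mu ℝ s x * IncidenceAlgebra.mu ℝ t x else 0|)
      (fun t _ => abs_nonneg _) (mem_univ s))
  have h3 : (Fintype.card L : ℝ) ≤ ∑ s : L, ∑ t : L,
      |∑ x : L, if s ≤ x ∧ t ≤ x then
          IncidenceAlgebra.mu ℝ s x * IncidenceAlgebra.mu ℝ t x else 0| := by
    calc (Fintype.card L : ℝ) = ∑ _s : L, (1 : ℝ) := by simp
      _ ≤ _ := Finset.sum_le_sum fun s _ => h2 s
  linarith
end
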